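/- Suppose there exists an index k ≥ 2 with a_k > (n−1)/(12·n²) and A_k ≥ 1/36, and let k₀ be the least such index. Then the number of Type I indices s with 2 ≤ s < k₀ is at most (3/2)·n·ln n. -/

import Mathlib

open scoped Classical

set_option maxHeartbeats 1000000 in
/-- If `k₀` is the least index `k ≥ 2` with `a_k > (n−1)/(12n²)` and `A_k ≥ 1/36`, then the
number of Type I indices `s` with `2 ≤ s < k₀` is at most `(3/2)·n·ln n`. -/
theorem typeI_count_before_k0 (n : ℕ) (hn : 4 ≤ n)
    (a A : ℕ → ℝ)
    (ha1 : a 1 = 1 / (Real.sqrt 2 * (n : ℝ) ^ ((3:ℝ)/2)))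
    (ha2 : a 2 = a 1 / ((n : ℝ) - 1))
    (hA0 : A 0 = 0)
    (hArec : ∀ k, A (k+1) = A k + a (k+1))
    (harec : ∀ k, 1 ≤ k →
      a (k+2) = min ((n : ℝ) * a (k+1) / ((n : ℝ) - 1)) (Real.sqrt (A (k+1)) / (2 * n)))
    (k₀ : ℕ) (hk₀ : 2 ≤ k₀)
    (hak₀ : a k₀ > ((n : ℝ) - 1) / (12 * (n : ℝ)^2))
    (hAk₀ : A k₀ ≥ 1 / 36)
    (hleast : ∀ k, 2 ≤ k → a k > ((n : ℝ) - 1) / (12 * (n : ℝ)^2) → A k ≥ 1 / 36 → k₀ ≤ k) :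
    (((Finset.Ico 2 k₀).filter
        (fun s => a (s + 1) = (n : ℝ) * a s / ((n : ℝ) - 1))).card : ℝ) ≤
      (3 / 2) * (n : ℝ) * Real.log n := by
  have hN4 : (4:ℝ) ≤ (n:ℝ) := by exact_mod_cast hn
  have hN0 : (0:ℝ) < (n:ℝ) := by linarith
  have hN1 : (0:ℝ) < (n:ℝ) - 1 := by linarith
  have hs2 : (0:ℝ) < Real.sqrt 2 := Real.sqrt_pos.mpr (by norm_num)
  have hsn0 : (0:ℝ) ≤ Real.sqrt n := Real.sqrt_nonneg _
  have h4 : Real.sqrt 4 = 2 := by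
    rw [show (4:ℝ) = 2^2 by norm_num, Real.sqrt_sq (by norm_num)]
  have hsn2 : (2:ℝ) ≤ Real.sqrt n :=
    calc (2:ℝ) = Real.sqrt 4 := h4.symm
      _ ≤ Real.sqrt n := Real.sqrt_le_sqrt hN4
  have hsnn : Real.sqrt n * Real.sqrt n = (n:ℝ) := Real.mul_self_sqrt hN0.le
  have hs2le : Real.sqrt 2 ≤ 2 :=
    calc Real.sqrt 2 ≤ Real.sqrt 4 := Real.sqrt_le_sqrt (by norm_num)
      _ = 2 := h4
  have hs21 : (1:ℝ) ≤ Real.sqrt 2 :=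
    calc (1:ℝ) = Real.sqrt 1 := Real.sqrt_one.symm
      _ ≤ Real.sqrt 2 := Real.sqrt_le_sqrt (by norm_num)
  have h32 : (n:ℝ) ^ ((3:ℝ)/2) = (n:ℝ) * Real.sqrt n := by
    rw [show (3:ℝ)/2 = 1 + 1/2 by norm_num, Real.rpow_add hN0, Real.rpow_one,
      ← Real.sqrt_eq_rpow]
  have ha1pos : 0 < a 1 := by
    rw [ha1, h32]
    exact div_pos one_pos (mul_pos hs2 (mul_pos hN0 (by linarith)))
  have ha2pos : 0 < a 2 := by rw [ha2]; exact div_pos ha1pos hN1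
  have hA1 : A 1 = a 1 := by rw [hArec 0, hA0]; ring
  have hA2 : A 2 = a 1 + a 2 := by rw [hArec 1, hA1]
  -- positivity of a and A
  have key : ∀ m, (0 < a (m+1) ∧ 0 < A (m+1)) ∧ (0 < a (m+2) ∧ 0 < A (m+2)) := by
    intro m
    induction m with
    | zero =>
      refine ⟨⟨ha1pos, by rw [hA1]; exact ha1pos⟩, ⟨ha2pos, ?_⟩⟩
      rw [hA2]; linarith
    | succ k ih =>
      obtain ⟨h2, h3⟩ := ih.2
      have hmin := harec (k+1) (by omega)
      have hpos3 : 0 < a (k+3) := by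
        rw [show k+1+2 = k+3 by omega, show k+1+1 = k+2 by omega] at hmin
        rw [hmin]
        refine lt_min (div_pos (mul_pos hN0 h2) hN1) (div_pos ?_ (by linarith))
        exact Real.sqrt_pos.mpr h3
      exact ⟨⟨h2, h3⟩, ⟨hpos3, by rw [hArec (k+2)]; linarith⟩⟩
  have hapos : ∀ k, 1 ≤ k → 0 < a k := by
    intro k hk
    obtain ⟨m, rfl⟩ : ∃ m, k = m + 1 := ⟨k - 1, by omega⟩
    exact (key m).1.1
  have hAmono : ∀ k, A k ≤ A (k+1) := by
    intro k
    have := hapos (k+1) (by omega)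
    rw [hArec k]; linarith
  -- a 2 ≤ sqrt (A 2) / (2n)
  have ha2le : a 2 ≤ Real.sqrt (A 2) / (2 * n) := by
    have hA2ge : a 1 ≤ A 2 := by rw [hA2]; linarith
    have hsa1 : Real.sqrt (a 1) ≤ Real.sqrt (A 2) := Real.sqrt_le_sqrt hA2ge
    have hub : a 1 ≤ (((n:ℝ)-1)/(2*n))^2 := by
      have hd8 : (8:ℝ) ≤ (n:ℝ) * Real.sqrt n := by nlinarith
      have h1 : a 1 ≤ 1/8 := by
        rw [ha1, h32]
        rw [div_le_div_iff₀ (mul_pos hs2 (mul_pos hN0 (by linarith))) (by norm_num)]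
        nlinarith [mul_le_mul hs21 hd8 (by norm_num) hs2.le]
      have h2 : (3:ℝ)/8 ≤ ((n:ℝ)-1)/(2*n) := by
        rw [div_le_div_iff₀ (by norm_num) (by linarith)]
        linarith
      have h3 : ((3:ℝ)/8)^2 ≤ (((n:ℝ)-1)/(2*n))^2 :=
        pow_le_pow_left₀ (by norm_num) h2 2
      have h4' : ((3:ℝ)/8)^2 = 9/64 := by norm_num
      linarith
    have hsb : Real.sqrt (a 1) ≤ ((n:ℝ)-1)/(2*n) := by
      calc Real.sqrt (a 1) ≤ Real.sqrt ((((n:ℝ)-1)/(2*n))^2) := Real.sqrt_le_sqrt hub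
        _ = ((n:ℝ)-1)/(2*n) := Real.sqrt_sq (by positivity)
    have hsq : Real.sqrt (a 1) * Real.sqrt (a 1) = a 1 := Real.mul_self_sqrt ha1pos.le
    have hs0 : 0 < Real.sqrt (a 1) := Real.sqrt_pos.mpr ha1pos
    have step : a 2 ≤ Real.sqrt (a 1) / (2*n) := by
      have hsb' : Real.sqrt (a 1) * (2*n) ≤ (n:ℝ)-1 :=
        (le_div_iff₀ (by positivity)).mp hsb
      rw [ha2, div_le_div_iff₀ hN1 (by linarith)]
      nlinarith [mul_le_mul_of_nonneg_left hsb' hs0.le]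
    calc a 2 ≤ Real.sqrt (a 1) / (2*n) := step
      _ ≤ Real.sqrt (A 2) / (2*n) := by gcongr
  -- growth lemma
  have grow : ∀ m, 2 ≤ m →
      a 2 * ((n:ℝ)/((n:ℝ)-1)) ^ (((Finset.Ico 2 m).filter
        (fun s => a (s + 1) = (n : ℝ) * a s / ((n : ℝ) - 1))).card) ≤ a m := by
    intro m hm
    induction m with
    | zero => omega
    | succ m ih =>
      rcases Nat.lt_or_ge m 2 with h | h
      · have : m = 1 := by omega
        subst this
        simp [Finset.Ico_self]
      · have ih' := ih h
        rw [Nat.Ico_succ_right_eq_insert_Ico h, Finset.filter_insert]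
        have hrpos : (0:ℝ) < (n:ℝ)/((n:ℝ)-1) := div_pos hN0 hN1
        by_cases hp : a (m+1) = (n:ℝ) * a m / ((n:ℝ)-1)
        · rw [if_pos hp, Finset.card_insert_of_notMem (fun hmem => absurd (Finset.mem_Ico.mp (Finset.mem_filter.mp hmem).1).2 (by omega))]
          rw [pow_succ, ← mul_assoc]
          calc a 2 * ((n:ℝ)/((n:ℝ)-1)) ^ _ * ((n:ℝ)/((n:ℝ)-1))
              ≤ a m * ((n:ℝ)/((n:ℝ)-1)) := by
                exact mul_le_mul_of_nonneg_right ih' hrpos.le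
            _ = a (m+1) := by rw [hp]; field_simp
        · rw [if_neg hp]
          refine le_trans ih' ?_
          -- show a m ≤ a (m+1), Type II step
          obtain ⟨j, rfl⟩ : ∃ j, m = j + 2 := ⟨m - 2, by omega⟩
          have hmin := harec (j+1) (by omega)
          rw [show j+1+2 = j+3 by omega, show j+1+1 = j+2 by omega] at hmin
          have hII : a (j+3) = Real.sqrt (A (j+2)) / (2*n) := by
            rcases min_choice ((n:ℝ) * a (j+2) / ((n:ℝ)-1)) (Real.sqrt (A (j+2)) / (2*n)) with h'|h'
            · exact absurd (hmin.trans h') hp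
            · exact hmin.trans h'
          rw [show j+2+1 = j+3 by omega, hII]
          rcases Nat.eq_zero_or_pos j with rfl | hj
          · exact ha2le
          · obtain ⟨i, rfl⟩ : ∃ i, j = i + 1 := ⟨j - 1, by omega⟩
            have hmin' := harec (i+1) (by omega)
            rw [show i+1+2 = i+3 by omega, show i+1+1 = i+2 by omega] at hmin'
            calc a (i+3) ≤ Real.sqrt (A (i+2)) / (2*n) := hmin' ▸ min_le_right _ _
              _ ≤ Real.sqrt (A (i+3)) / (2*n) := by
                  have hss : Real.sqrt (A (i+2)) ≤ Real.sqrt (A (i+3)) :=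
                    Real.sqrt_le_sqrt (hAmono (i+2))
                  gcongr
  -- now the endgame
  rcases Nat.lt_or_ge k₀ 3 with hk3 | hk3
  · have hk2 : k₀ = 2 := by omega
    subst hk2
    rw [Finset.Ico_self, Finset.filter_empty, Finset.card_empty]
    have hl : (0:ℝ) ≤ Real.log n := Real.log_nonneg (by linarith)
    have : (0:ℝ) ≤ (3/2) * (n:ℝ) * Real.log n := by positivity
    exact_mod_cast this
  · obtain ⟨j, rfl⟩ : ∃ j, k₀ = j + 3 := ⟨k₀ - 3, by omega⟩
    have hmin := harec (j+1) (by omega)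
    rw [show j+1+2 = j+3 by omega, show j+1+1 = j+2 by omega] at hmin
    have upper : a (j+3) ≤ 1/(12*n) := by
      rcases lt_or_ge (A (j+2)) (1/36) with hA | hA
      · have h1 : a (j+3) ≤ Real.sqrt (A (j+2)) / (2*n) := hmin ▸ min_le_right _ _
        have h2 : Real.sqrt (A (j+2)) ≤ 1/6 := by
          calc Real.sqrt (A (j+2)) ≤ Real.sqrt (1/36) := Real.sqrt_le_sqrt hA.le
            _ = 1/6 := by
                rw [show (1:ℝ)/36 = (1/6)^2 by norm_num, Real.sqrt_sq (by norm_num)]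
        calc a (j+3) ≤ Real.sqrt (A (j+2)) / (2*n) := h1
          _ ≤ (1/6)/(2*n) := by gcongr
          _ = 1/(12*n) := by ring
      · have hnot : a (j+2) ≤ ((n:ℝ)-1)/(12*(n:ℝ)^2) := by
          by_contra hgt
          push_neg at hgt
          have := hleast (j+2) (by omega) hgt hA
          omega
        have h1 : a (j+3) ≤ (n:ℝ) * a (j+2) / ((n:ℝ)-1) := hmin ▸ min_le_left _ _
        have h2 : (n:ℝ) * a (j+2) / ((n:ℝ)-1)
            ≤ (n:ℝ) * (((n:ℝ)-1)/(12*(n:ℝ)^2)) / ((n:ℝ)-1) := by gcongr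
        have h3 : (n:ℝ) * (((n:ℝ)-1)/(12*(n:ℝ)^2)) / ((n:ℝ)-1) = 1/(12*n) := by
          field_simp
        linarith
    have hg := grow (j+3) (by omega)
    set T := ((Finset.Ico 2 (j+3)).filter
      (fun s => a (s + 1) = (n : ℝ) * a s / ((n : ℝ) - 1))).card with hTdef
    have hD : (0:ℝ) < Real.sqrt 2 * ((n:ℝ) * Real.sqrt n) * ((n:ℝ)-1) := by
      have : (0:ℝ) < Real.sqrt n := by linarith
      positivity
    have hDa : Real.sqrt 2 * ((n:ℝ) * Real.sqrt n) * ((n:ℝ)-1) * a 2 = 1 := by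
      rw [ha2, ha1, h32]
      field_simp
    have hq : a 2 * ((n:ℝ)/((n:ℝ)-1))^T ≤ 1/(12*n) := le_trans hg upper
    have h5 : ((n:ℝ)/((n:ℝ)-1))^T
        ≤ Real.sqrt 2 * ((n:ℝ) * Real.sqrt n) * ((n:ℝ)-1) / (12*n) := by
      have h6 := mul_le_mul_of_nonneg_left hq hD.le
      calc ((n:ℝ)/((n:ℝ)-1))^T
          = Real.sqrt 2 * ((n:ℝ) * Real.sqrt n) * ((n:ℝ)-1) * a 2
              * ((n:ℝ)/((n:ℝ)-1))^T := by rw [hDa]; ring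
        _ = Real.sqrt 2 * ((n:ℝ) * Real.sqrt n) * ((n:ℝ)-1)
              * (a 2 * ((n:ℝ)/((n:ℝ)-1))^T) := by ring
        _ ≤ Real.sqrt 2 * ((n:ℝ) * Real.sqrt n) * ((n:ℝ)-1) * (1/(12*n)) := h6
        _ = Real.sqrt 2 * ((n:ℝ) * Real.sqrt n) * ((n:ℝ)-1) / (12*n) := by ring
    have h7 : Real.sqrt 2 * ((n:ℝ) * Real.sqrt n) * ((n:ℝ)-1) / (12*n)
        ≤ (n:ℝ) * Real.sqrt n := by
      rw [div_le_iff₀ (by positivity)]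
      have hu : (0:ℝ) ≤ (n:ℝ) * Real.sqrt n := mul_nonneg hN0.le hsn0
      have h8 : Real.sqrt 2 * (((n:ℝ) * Real.sqrt n) * ((n:ℝ)-1))
          ≤ 2 * (((n:ℝ) * Real.sqrt n) * ((n:ℝ)-1)) :=
        mul_le_mul_of_nonneg_right hs2le (mul_nonneg hu hN1.le)
      nlinarith [mul_nonneg hu hN1.le]
    have hrT : ((n:ℝ)/((n:ℝ)-1))^T ≤ (n:ℝ) * Real.sqrt n := le_trans h5 h7
    have hX : (0:ℝ) < (n:ℝ)/((n:ℝ)-1) := div_pos hN0 hN1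
    have hlog := Real.log_le_log (pow_pos hX T) hrT
    rw [Real.log_pow] at hlog
    have hsnpos : (0:ℝ) < Real.sqrt n := by linarith
    have hlogn : Real.log ((n:ℝ) * Real.sqrt n) = (3/2) * Real.log n := by
      rw [Real.log_mul (ne_of_gt hN0) (ne_of_gt hsnpos), Real.log_sqrt hN0.le]
      ring
    rw [hlogn] at hlog
    have hlogr : 1/(n:ℝ) ≤ Real.log ((n:ℝ)/((n:ℝ)-1)) := by
      have h8 : Real.log (((n:ℝ)-1)/(n:ℝ)) ≤ ((n:ℝ)-1)/(n:ℝ) - 1 :=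
        Real.log_le_sub_one_of_pos (by positivity)
      have h9 : Real.log (((n:ℝ)-1)/(n:ℝ)) = - Real.log ((n:ℝ)/((n:ℝ)-1)) := by
        rw [← Real.log_inv]
        congr 1
        field_simp
      have h10 : ((n:ℝ)-1)/(n:ℝ) - 1 = -(1/(n:ℝ)) := by field_simp; ring
      rw [h9, h10] at h8
      linarith
    have h11 : (T:ℝ) * (1/n) ≤ (T:ℝ) * Real.log ((n:ℝ)/((n:ℝ)-1)) :=
      mul_le_mul_of_nonneg_left hlogr (Nat.cast_nonneg T)
    have h12 : (T:ℝ) * (1/n) ≤ (3/2) * Real.log n := le_trans h11 hlog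
    have h13 : (T:ℝ) * (1/n) * n ≤ (3/2) * Real.log n * n :=
      mul_le_mul_of_nonneg_right h12 hN0.le
    have h14 : (T:ℝ) * (1/n) * n = (T:ℝ) := by field_simp
    linarith
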